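/- Let k ≥ 1 and let Γ be a finite graph whose vertex set is partitioned into a set W of 'white' vertices and a set B_e of 'external black' vertices, and let E_θ be a set of ('dashed') edges of Γ, each of whose two endpoints lies in W ∪ B_e. Assume: (i) every white vertex is incident to at least 3 dashed edges (counted with multiplicity for loops), (ii) every external black vertex is incident to at least 1 dashed edge, (iii) |B_e| ≥ 2k, and (iv) |E_θ| − |W| ≤ k. Then W = ∅, |E_θ| = k, and |B_e| = 2k. -/
import Mathlib


/-- Combinatorial core of Proposition 3.4 (`keypropforpairing`): a plain graph
of order at most `k` (order = #dashed edges − #white vertices), whose every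
white vertex has dashed degree ≥ 3, whose every external black vertex has
dashed degree ≥ 1, and which has at least `2k` external black vertices, must
have no white vertices, exactly `k` dashed edges and exactly `2k` external
black vertices.  The incidence structure is encoded by a degree function
`deg` on the vertices `W ⊕ Be` whose total sum is twice the number of dashed
edges (every dashed edge has its two endpoints in `W ∪ B_e`). -/
theorem plain_graph_order_count (k : ℕ) (hk : 1 ≤ k)
    (W Be E : Type) [Fintype W] [Fintype Be] [Fintype E]
    (deg : W ⊕ Be → ℕ)
    (handshake : ∑ v, deg v = 2 * Fintype.card E)
    (hW : ∀ w : W, 3 ≤ deg (Sum.inl w))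
    (hB : ∀ b : Be, 1 ≤ deg (Sum.inr b))
    (hBe : 2 * k ≤ Fintype.card Be)
    (horder : (Fintype.card E : ℤ) - (Fintype.card W : ℤ) ≤ (k : ℤ)) :
    Fintype.card W = 0 ∧ Fintype.card E = k ∧ Fintype.card Be = 2 * k := by
  have h1 : 3 * Fintype.card W ≤ ∑ w : W, deg (Sum.inl w) := by
    calc 3 * Fintype.card W = ∑ _w : W, 3 := by simp [mul_comm]
    _ ≤ ∑ w : W, deg (Sum.inl w) := Finset.sum_le_sum fun w _ => hW w
  have h2 : Fintype.card Be ≤ ∑ b : Be, deg (Sum.inr b) := by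
    calc Fintype.card Be = ∑ _b : Be, 1 := by simp
    _ ≤ ∑ b : Be, deg (Sum.inr b) := Finset.sum_le_sum fun b _ => hB b
  have hsplit : ∑ v, deg v = (∑ w : W, deg (Sum.inl w)) + ∑ b : Be, deg (Sum.inr b) :=
    Fintype.sum_sum_type deg
  have key : 3 * Fintype.card W + Fintype.card Be ≤ 2 * Fintype.card E := by
    rw [← handshake, hsplit]; exact Nat.add_le_add h1 h2
  have hEk : Fintype.card E ≤ k + Fintype.card W := by omega
  have hW0 : Fintype.card W = 0 := by omega
  refine ⟨hW0, by omega, by omega⟩
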